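/- Let V and W be finite-dimensional real inner product spaces, let Λ : V → V, P_V : V → V, Θ : W → W, P_W : W → W be self-adjoint positive semidefinite linear maps, and let τ > 0, g ≥ 0, κ₁ > 0, κ₂ > 0 be real numbers. Set L := Λ + (g·κ₁)·id and D := Θ + (g·κ₂)·id. Suppose Q, Q', H ∈ V and u, u', μ ∈ W and s ∈ ℝ satisfy the scheme equations P_V(Q' - Q) + τ·L(Q') = τ·g·(κ₁·Q - H) and P_W(u' - u) + τ·D(u') = τ·g·(κ₂·u - μ), and define s̃' := s + g·(⟨H, Q' - Q⟩ + ⟨μ, u' - u⟩). Then, with δQ := Q' - Q and δu := u' - u and R := (1/τ)·(⟨P_V δQ, δQ⟩ + (τ/2)·⟨L δQ, δQ⟩ + ⟨P_W δu, δu⟩ + (τ/2)·⟨D δu, δu⟩), the modified energy satisfies (1/2)⟨Λ Q', Q'⟩ + (1/2)⟨Θ u', u'⟩ + s̃' ≤ (1/2)⟨Λ Q, Q⟩ + (1/2)⟨Θ u, u⟩ + s - R; in particular R ≥ 0 and the modified energy does not increase. -/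

import Mathlib

open scoped RealInnerProductSpace

lemma aux_energy {V : Type*} [NormedAddCommGroup V] [InnerProductSpace ℝ V]
    (Λ PV : V →ₗ[ℝ] V)
    (hΛsa : ∀ x y : V, ⟪Λ x, y⟫ = ⟪x, Λ y⟫)
    (τ g κ : ℝ)
    (L : V →ₗ[ℝ] V) (hL : L = Λ + (g * κ) • LinearMap.id)
    (Q Q' H : V)
    (heq : PV (Q' - Q) + τ • L Q' = (τ * g) • (κ • Q - H)) :
    τ * ((1/2) * ⟪Λ Q', Q'⟫ + g * ⟪H, Q' - Q⟫) + ⟪PV (Q' - Q), Q' - Q⟫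
      + (τ/2) * ⟪L (Q' - Q), Q' - Q⟫ + (τ * g * κ / 2) * ⟪Q' - Q, Q' - Q⟫
      = τ * ((1/2) * ⟪Λ Q, Q⟫) := by
  have e : ⟪PV (Q' - Q) + τ • L Q', Q' - Q⟫ = ⟪(τ * g) • (κ • Q - H), Q' - Q⟫ := by
    rw [heq]
  have F1 : ⟪Λ Q, Q'⟫ = ⟪Λ Q', Q⟫ := by
    rw [hΛsa Q Q', real_inner_comm]
  simp only [hL, LinearMap.add_apply, LinearMap.smul_apply, LinearMap.id_apply,
    map_sub, inner_add_left, inner_add_right, inner_sub_left, inner_sub_right,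
    real_inner_smul_left, real_inner_smul_right] at e ⊢
  linear_combination e - (τ/2) * F1

lemma aux_Lpos {V : Type*} [NormedAddCommGroup V] [InnerProductSpace ℝ V]
    (Λ : V →ₗ[ℝ] V) (hΛpos : ∀ x : V, 0 ≤ ⟪Λ x, x⟫)
    (g κ : ℝ) (hg : 0 ≤ g) (hκ : 0 ≤ κ)
    (L : V →ₗ[ℝ] V) (hL : L = Λ + (g * κ) • LinearMap.id) (x : V) :
    0 ≤ ⟪L x, x⟫ := by
  have h1 := hΛpos x
  have h2 : (0:ℝ) ≤ (g * κ) * ⟪x, x⟫ :=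
    mul_nonneg (mul_nonneg hg hκ) real_inner_self_nonneg
  simp only [hL, LinearMap.add_apply, LinearMap.smul_apply, LinearMap.id_apply,
    inner_add_left, real_inner_smul_left]
  linarith

/-- Core one-step energy-dissipation estimate (inequality (39) in Theorem 3 of the
paper) for the provisional R-GSAV-EI update: with `L = Λ + (g κ₁) id`,
`D = Θ + (g κ₂) id`, the scheme equations and the provisional SAV update `s̃'`, the
modified energy decreases by at least the dissipation rate `R`, and `R ≥ 0`. -/
theorem stmt12 {V W : Type*}
    [NormedAddCommGroup V] [InnerProductSpace ℝ V] [FiniteDimensional ℝ V]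
    [NormedAddCommGroup W] [InnerProductSpace ℝ W] [FiniteDimensional ℝ W]
    (Λ PV : V →ₗ[ℝ] V) (Θ PW : W →ₗ[ℝ] W)
    (hΛsa : ∀ x y : V, ⟪Λ x, y⟫ = ⟪x, Λ y⟫) (hΛpos : ∀ x : V, 0 ≤ ⟪Λ x, x⟫)
    (hPVsa : ∀ x y : V, ⟪PV x, y⟫ = ⟪x, PV y⟫) (hPVpos : ∀ x : V, 0 ≤ ⟪PV x, x⟫)
    (hΘsa : ∀ x y : W, ⟪Θ x, y⟫ = ⟪x, Θ y⟫) (hΘpos : ∀ x : W, 0 ≤ ⟪Θ x, x⟫)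
    (hPWsa : ∀ x y : W, ⟪PW x, y⟫ = ⟪x, PW y⟫) (hPWpos : ∀ x : W, 0 ≤ ⟪PW x, x⟫)
    (τ g κ₁ κ₂ : ℝ) (hτ : 0 < τ) (hg : 0 ≤ g) (hκ₁ : 0 < κ₁) (hκ₂ : 0 < κ₂)
    (L : V →ₗ[ℝ] V) (hL : L = Λ + (g * κ₁) • LinearMap.id)
    (D : W →ₗ[ℝ] W) (hD : D = Θ + (g * κ₂) • LinearMap.id)
    (Q Q' H : V) (u u' μ : W) (s : ℝ)
    (hQeq : PV (Q' - Q) + τ • L Q' = (τ * g) • (κ₁ • Q - H))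
    (hueq : PW (u' - u) + τ • D u' = (τ * g) • (κ₂ • u - μ))
    (s' : ℝ) (hs' : s' = s + g * (⟪H, Q' - Q⟫ + ⟪μ, u' - u⟫))
    (R : ℝ)
    (hR : R = (1 / τ) * (⟪PV (Q' - Q), Q' - Q⟫ + (τ / 2) * ⟪L (Q' - Q), Q' - Q⟫
        + ⟪PW (u' - u), u' - u⟫ + (τ / 2) * ⟪D (u' - u), u' - u⟫)) :
    (1 / 2) * ⟪Λ Q', Q'⟫ + (1 / 2) * ⟪Θ u', u'⟫ + s'
        ≤ (1 / 2) * ⟪Λ Q, Q⟫ + (1 / 2) * ⟪Θ u, u⟫ + s - R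
      ∧ 0 ≤ R := by
  have eV := aux_energy Λ PV hΛsa τ g κ₁ L hL Q Q' H hQeq
  have eW := aux_energy Θ PW hΘsa τ g κ₂ D hD u u' μ hueq
  have hLp : 0 ≤ ⟪L (Q' - Q), Q' - Q⟫ :=
    aux_Lpos Λ hΛpos g κ₁ hg hκ₁.le L hL (Q' - Q)
  have hDp : 0 ≤ ⟪D (u' - u), u' - u⟫ :=
    aux_Lpos Θ hΘpos g κ₂ hg hκ₂.le D hD (u' - u)
  have hPVp := hPVpos (Q' - Q)
  have hPWp := hPWpos (u' - u)
  have hQQ : (0:ℝ) ≤ ⟪Q' - Q, Q' - Q⟫ := real_inner_self_nonneg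
  have huu : (0:ℝ) ≤ ⟪u' - u, u' - u⟫ := real_inner_self_nonneg
  have hτR : τ * R = ⟪PV (Q' - Q), Q' - Q⟫ + (τ / 2) * ⟪L (Q' - Q), Q' - Q⟫
      + ⟪PW (u' - u), u' - u⟫ + (τ / 2) * ⟪D (u' - u), u' - u⟫ := by
    rw [hR]; field_simp
  have hRnn : 0 ≤ R := by
    have : 0 ≤ τ * R := by
      rw [hτR]
      have := hτ.le
      positivity
    exact nonneg_of_mul_nonneg_right this hτ
  refine ⟨?_, hRnn⟩
  rw [← mul_le_mul_iff_right₀ hτ]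
  have h1 : (0:ℝ) ≤ (τ * g * κ₁ / 2) * ⟪Q' - Q, Q' - Q⟫ := by positivity
  have h2 : (0:ℝ) ≤ (τ * g * κ₂ / 2) * ⟪u' - u, u' - u⟫ := by positivity
  nlinarith [eV, eW, hτR, hs']
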